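/- Let γ ∈ (−2,0], m ≥ 12, and let κ : ℝ³ → ℝ be measurable with 0 ≤ κ(x) ≤ κ₂ for all x. Let f : ℝ³×ℝ³ → [0,∞) be measurable with f(y,w) ≤ M for almost every (y,w) and ∫_{ℝ⁶} ( ⟨y⟩^{m} + ⟨w⟩^{m} ) f(y,w) dy dw ≤ M, for some M < ∞. Then there exists a constant C > 0, depending only on γ, m, κ₂ and M, such that for all (x,v) ∈ ℝ³×ℝ³: ∫_{ℝ⁶} κ(x−y) |v−w|^{γ+1} f(y,w) dy dw ≤ C ⟨v⟩^{γ+1} and ∫_{ℝ⁶} κ(x−y) |v−w|^{γ} f(y,w) dy dw ≤ C ⟨v⟩^{γ}. -/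
import Mathlib


open MeasureTheory Real

noncomputable section

abbrev E3 : Type := EuclideanSpace ℝ (Fin 3)

/-- `⟨y⟩ = √(1+|y|²)`. -/
def jap (x : E3) : ℝ := Real.sqrt (1 + ‖x‖ ^ 2)

open scoped ENNReal

lemma one_le_jap (x : E3) : 1 ≤ jap x := by
  have : Real.sqrt 1 ≤ Real.sqrt (1 + ‖x‖ ^ 2) :=
    Real.sqrt_le_sqrt (by nlinarith [sq_nonneg ‖x‖])
  simpa [jap] using this

lemma jap_pos (x : E3) : 0 < jap x := lt_of_lt_of_le one_pos (one_le_jap x)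

lemma jap_nonneg (x : E3) : 0 ≤ jap x := (jap_pos x).le

lemma norm_le_jap (x : E3) : ‖x‖ ≤ jap x := by
  have : Real.sqrt (‖x‖ ^ 2) ≤ Real.sqrt (1 + ‖x‖ ^ 2) :=
    Real.sqrt_le_sqrt (by linarith)
  simpa [jap, Real.sqrt_sq (norm_nonneg x)] using this

lemma jap_le_one_add_norm (x : E3) : jap x ≤ 1 + ‖x‖ := by
  have h : Real.sqrt (1 + ‖x‖ ^ 2) ≤ Real.sqrt ((1 + ‖x‖) ^ 2) :=
    Real.sqrt_le_sqrt (by nlinarith [norm_nonneg x])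
  simpa [jap, Real.sqrt_sq (by positivity : (0:ℝ) ≤ 1 + ‖x‖)] using h

lemma one_add_norm_le_two_jap (x : E3) : 1 + ‖x‖ ≤ 2 * jap x := by
  have h : Real.sqrt ((1 + ‖x‖) ^ 2) ≤ Real.sqrt (4 * (1 + ‖x‖ ^ 2)) :=
    Real.sqrt_le_sqrt (by nlinarith [norm_nonneg x, sq_nonneg (‖x‖ - 1)])
  have h2 : Real.sqrt (4 * (1 + ‖x‖ ^ 2)) = 2 * Real.sqrt (1 + ‖x‖ ^ 2) := by
    rw [show (4 : ℝ) * (1 + ‖x‖ ^ 2) = 2 ^ 2 * (1 + ‖x‖ ^ 2) by ring,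
      Real.sqrt_mul (by positivity), Real.sqrt_sq (by norm_num)]
  rw [jap]
  calc 1 + ‖x‖ = Real.sqrt ((1 + ‖x‖) ^ 2) := (Real.sqrt_sq (by positivity)).symm
    _ ≤ Real.sqrt (4 * (1 + ‖x‖ ^ 2)) := h
    _ = 2 * Real.sqrt (1 + ‖x‖ ^ 2) := h2

lemma add_norm_le_jap_mul (v w : E3) : ‖v‖ + ‖w‖ ≤ jap v * jap w := by
  have h1 : jap v * jap w = Real.sqrt ((1 + ‖v‖ ^ 2) * (1 + ‖w‖ ^ 2)) := by
    rw [jap, jap, ← Real.sqrt_mul (by positivity)]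
  have h2 : Real.sqrt ((‖v‖ + ‖w‖) ^ 2) ≤ Real.sqrt ((1 + ‖v‖ ^ 2) * (1 + ‖w‖ ^ 2)) :=
    Real.sqrt_le_sqrt (by nlinarith [sq_nonneg (‖v‖ * ‖w‖ - 1), norm_nonneg v, norm_nonneg w])
  rw [h1]
  calc ‖v‖ + ‖w‖ = Real.sqrt ((‖v‖ + ‖w‖) ^ 2) := (Real.sqrt_sq (by positivity)).symm
    _ ≤ _ := h2

lemma continuous_jap : Continuous jap :=
  Real.continuous_sqrt.comp (by continuity)

lemma measurable_jap : Measurable jap := continuous_jap.measurable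

lemma rpow_two_eq_four : ((2:ℝ)) ^ (2:ℝ) = 4 := by
  rw [show (2:ℝ) = ((2:ℕ):ℝ) by norm_num, Real.rpow_natCast]
  norm_num

lemma two_inv_rpow_neg_two : ((2:ℝ)⁻¹) ^ (-2:ℝ) = 4 := by
  rw [Real.inv_rpow (by norm_num), Real.rpow_neg (by norm_num), inv_inv, rpow_two_eq_four]

lemma six_six_le {a b m : ℝ} (ha : 1 ≤ a) (hb : 1 ≤ b) (hm : 12 ≤ m) :
    a ^ (6:ℝ) * b ^ (6:ℝ) ≤ a ^ m + b ^ m := by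
  have key : ∀ c d : ℝ, 1 ≤ c → 1 ≤ d → c ≤ d →
      c ^ (6:ℝ) * d ^ (6:ℝ) ≤ c ^ m + d ^ m := by
    intro c d hc hd hcd
    have h1 : c ^ (6:ℝ) ≤ d ^ (6:ℝ) := Real.rpow_le_rpow (by linarith) hcd (by norm_num)
    have h2 : c ^ (6:ℝ) * d ^ (6:ℝ) ≤ d ^ (6:ℝ) * d ^ (6:ℝ) :=
      mul_le_mul_of_nonneg_right h1 (Real.rpow_nonneg (by linarith) _)
    have h3 : d ^ (6:ℝ) * d ^ (6:ℝ) = d ^ (12:ℝ) := by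
      rw [← Real.rpow_add (by linarith)]; norm_num
    have h4 : d ^ (12:ℝ) ≤ d ^ m := Real.rpow_le_rpow_of_exponent_le hd hm
    have h5 : 0 ≤ c ^ m := Real.rpow_nonneg (by linarith) m
    calc c ^ (6:ℝ) * d ^ (6:ℝ) ≤ d ^ (12:ℝ) := h2.trans_eq h3
      _ ≤ d ^ m := h4
      _ ≤ c ^ m + d ^ m := by linarith
  rcases le_total a b with h | h
  · exact key a b ha hb h
  · have := key b a hb ha h
    linarith [this]

lemma ball_rpow_bound {α : ℝ} (hα1 : -2 < α) (hα0 : α < 0) {δ : ℝ} (hδ : 0 < δ) :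
    (∫⁻ u : E3, ENNReal.ofReal (if ‖u‖ < δ then ‖u‖ ^ α else 0)) ≤
      ENNReal.ofReal (δ ^ (3 + α)) * (8 * volume (Metric.ball (0:E3) 1)) := by
  set B := volume (Metric.ball (0:E3) 1) with hB
  -- the dyadic majorant
  set g : ℕ → E3 → ℝ≥0∞ := fun k u =>
    (Metric.ball (0:E3) (δ * 2⁻¹ ^ k)).indicator
      (fun _ => ENNReal.ofReal ((δ * 2⁻¹ ^ (k+1)) ^ α)) u with hg
  have hpt : ∀ u : E3, ENNReal.ofReal (if ‖u‖ < δ then ‖u‖ ^ α else 0) ≤ ∑' k, g k u := by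
    intro u
    by_cases h : ‖u‖ < δ
    swap
    · simp [if_neg h]
    rw [if_pos h]
    rcases eq_or_lt_of_le (norm_nonneg u) with h0 | h0
    · rw [← h0, Real.zero_rpow (ne_of_lt hα0)]
      simp
    · have hex : ∃ k : ℕ, δ * 2⁻¹ ^ (k+1) ≤ ‖u‖ := by
        obtain ⟨n, hn⟩ := exists_pow_lt_of_lt_one (div_pos h0 hδ) (by norm_num : (2:ℝ)⁻¹ < 1)
        refine ⟨n, ?_⟩
        have h2 : (2:ℝ)⁻¹ ^ (n+1) ≤ 2⁻¹ ^ n := by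
          apply pow_le_pow_of_le_one (by norm_num) (by norm_num); omega
        have := (lt_div_iff₀ hδ).mp hn
        nlinarith [pow_pos (show (0:ℝ) < 2⁻¹ by norm_num) n]
      set k₀ := Nat.find hex with hk₀
      have h1 : δ * 2⁻¹ ^ (k₀+1) ≤ ‖u‖ := Nat.find_spec hex
      have h2 : ‖u‖ < δ * 2⁻¹ ^ k₀ := by
        rcases Nat.eq_zero_or_pos k₀ with hz | hpos
        · simpa [hz] using h
        · have := Nat.find_min hex (show k₀ - 1 < k₀ by omega)
          push_neg at this
          have : ‖u‖ < δ * 2⁻¹ ^ (k₀ - 1 + 1) := this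
          rwa [Nat.sub_add_cancel hpos] at this
      refine le_trans ?_ (ENNReal.le_tsum k₀)
      simp only [hg]
      have hmem : u ∈ Metric.ball (0:E3) (δ * 2⁻¹ ^ k₀) := by
        simpa [mem_ball_zero_iff] using h2
      rw [Set.indicator_of_mem hmem]
      exact ENNReal.ofReal_le_ofReal
        (Real.rpow_le_rpow_of_nonpos (by positivity) h1 hα0.le)
  calc (∫⁻ u : E3, ENNReal.ofReal (if ‖u‖ < δ then ‖u‖ ^ α else 0))
      ≤ ∫⁻ u, ∑' k, g k u := lintegral_mono hpt
    _ = ∑' k, ∫⁻ u, g k u := by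
        refine lintegral_tsum fun k => ?_
        exact (measurable_const.indicator measurableSet_ball).aemeasurable
    _ ≤ ∑' k : ℕ, (ENNReal.ofReal (δ ^ (3+α)) * (4 * B)) * (ENNReal.ofReal 2⁻¹) ^ k := by
        refine ENNReal.tsum_le_tsum fun k => ?_
        simp only [hg]
        rw [lintegral_indicator_const measurableSet_ball,
          Measure.addHaar_ball _ _ (by positivity : (0:ℝ) ≤ δ * 2⁻¹ ^ k),
          finrank_euclideanSpace_fin, ← hB]
        have key : (δ * 2⁻¹ ^ (k+1)) ^ α * (δ * 2⁻¹ ^ k) ^ 3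
            ≤ δ ^ (3+α) * 4 * 2⁻¹ ^ k := by
          have e1 : (δ * 2⁻¹ ^ (k+1)) ^ α = δ ^ α * ((2:ℝ)⁻¹ ^ (k+1)) ^ α :=
            Real.mul_rpow hδ.le (by positivity)
          have e2 : ((2:ℝ)⁻¹ ^ (k+1)) ^ α ≤ ((2:ℝ)⁻¹ ^ (k+1)) ^ (-2 : ℝ) := by
            apply Real.rpow_le_rpow_of_exponent_ge (by positivity)
              (by apply pow_le_one₀ <;> norm_num) hα1.le
          have e3 : ((2:ℝ)⁻¹ ^ (k+1)) ^ (-2 : ℝ) = 4 * 4 ^ k := by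
            have h1 : ((2:ℝ)⁻¹ ^ (k+1)) ^ (-2 : ℝ) = (((2:ℝ)⁻¹ ^ (k+1)) ^ (2:ℕ))⁻¹ := by
              rw [← Real.rpow_natCast ((2:ℝ)⁻¹ ^ (k+1)) 2, ← Real.rpow_neg (by positivity)]
              norm_num
            have h2 : (((2:ℝ)⁻¹ ^ (k+1)) ^ (2:ℕ))⁻¹ = (2:ℝ) ^ (2*(k+1)) := by
              rw [inv_pow, inv_pow, inv_inv, ← pow_mul]
              congr 1
              ring
            rw [h1, h2, pow_mul, pow_succ]
            norm_num [mul_comm]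
          have e4 : δ ^ α * δ ^ (3:ℕ) = δ ^ (3 + α) := by
            rw [← Real.rpow_natCast δ 3, ← Real.rpow_add hδ]
            norm_num [add_comm]
          have hδα : 0 ≤ δ ^ α := Real.rpow_nonneg hδ.le α
          calc (δ * 2⁻¹ ^ (k+1)) ^ α * (δ * 2⁻¹ ^ k) ^ 3
              = δ ^ α * ((2:ℝ)⁻¹ ^ (k+1)) ^ α * (δ ^ (3:ℕ) * (2⁻¹ ^ k) ^ (3:ℕ)) := by
                rw [e1, mul_pow]
            _ ≤ δ ^ α * (4 * 4 ^ k) * (δ ^ (3:ℕ) * (2⁻¹ ^ k) ^ (3:ℕ)) := by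
                have := e2.trans_eq e3
                have h3 : (0:ℝ) ≤ δ ^ (3:ℕ) * (2⁻¹ ^ k) ^ (3:ℕ) := by positivity
                nlinarith [mul_le_mul_of_nonneg_left this hδα]
            _ = (δ ^ α * δ ^ (3:ℕ)) * (4 * (4 ^ k * (2⁻¹ ^ k) ^ (3:ℕ))) := by ring
            _ = δ ^ (3+α) * (4 * 2⁻¹ ^ k) := by
                have e5 : (4:ℝ) ^ k * ((2:ℝ)⁻¹ ^ k) ^ (3:ℕ) = 2⁻¹ ^ k := by
                  rw [← pow_mul, show k*3 = 3*k by ring, pow_mul, ← mul_pow]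
                  norm_num
                rw [e5, e4]
            _ = δ ^ (3+α) * 4 * 2⁻¹ ^ k := by ring
        calc ENNReal.ofReal ((δ * 2⁻¹ ^ (k+1)) ^ α) * (ENNReal.ofReal ((δ * 2⁻¹ ^ k) ^ 3) * B)
            = ENNReal.ofReal ((δ * 2⁻¹ ^ (k+1)) ^ α * (δ * 2⁻¹ ^ k) ^ 3) * B := by
              rw [ENNReal.ofReal_mul (by positivity), mul_assoc]
          _ ≤ ENNReal.ofReal (δ ^ (3+α) * 4 * 2⁻¹ ^ k) * B :=
              mul_le_mul_left (ENNReal.ofReal_le_ofReal key) B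
          _ = ENNReal.ofReal (δ ^ (3+α)) * (4 * B) * (ENNReal.ofReal 2⁻¹) ^ k := by
              rw [ENNReal.ofReal_mul (by positivity), ENNReal.ofReal_mul (by positivity),
                ENNReal.ofReal_pow (by norm_num),
                show ENNReal.ofReal 4 = 4 by norm_num]
              ring
    _ = (ENNReal.ofReal (δ ^ (3+α)) * (4 * B)) * (1 - ENNReal.ofReal 2⁻¹)⁻¹ := by
        rw [ENNReal.tsum_mul_left, ENNReal.tsum_geometric]
    _ = ENNReal.ofReal (δ ^ (3+α)) * (8 * B) := by
        have h2 : ENNReal.ofReal 2⁻¹ = 2⁻¹ := by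
          rw [ENNReal.ofReal_inv_of_pos (by norm_num)]; norm_num
        have h12 : (1 : ℝ≥0∞) - 2⁻¹ = 2⁻¹ := by
          rw [ENNReal.sub_eq_of_eq_add (by norm_num)]
          rw [ENNReal.inv_two_add_inv_two]
        rw [h2, h12, inv_inv]
        ring

lemma lintegral_jap_rpow_lt_top {s : ℝ} (hs : 3 < s) :
    (∫⁻ y : E3, ENNReal.ofReal (jap y ^ (-s))) < ⊤ := by
  have hs0 : 0 < s := by linarith
  have hpt : ∀ y : E3, ENNReal.ofReal (jap y ^ (-s)) ≤
      ENNReal.ofReal (2 ^ s) * ENNReal.ofReal ((1 + ‖y‖) ^ (-s)) := by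
    intro y
    rw [← ENNReal.ofReal_mul (by positivity)]
    apply ENNReal.ofReal_le_ofReal
    have h1 : (1 + ‖y‖) / 2 ≤ jap y := by
      have := one_add_norm_le_two_jap y; linarith
    have h2 : jap y ^ (-s) ≤ ((1 + ‖y‖) / 2) ^ (-s) :=
      Real.rpow_le_rpow_of_nonpos (by positivity) h1 (by linarith)
    have h3 : ((1 + ‖y‖) / 2) ^ (-s) = 2 ^ s * (1 + ‖y‖) ^ (-s) := by
      rw [Real.div_rpow (by positivity) (by norm_num),
        Real.rpow_neg (by positivity) s, Real.rpow_neg (by norm_num : (0:ℝ) ≤ 2) s]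
      have : ((2:ℝ) ^ s) ≠ 0 := by positivity
      field_simp
    rw [← h3]; exact h2
  calc (∫⁻ y : E3, ENNReal.ofReal (jap y ^ (-s)))
      ≤ ∫⁻ y : E3, ENNReal.ofReal (2 ^ s) * ENNReal.ofReal ((1 + ‖y‖) ^ (-s)) :=
        lintegral_mono hpt
    _ = ENNReal.ofReal (2 ^ s) * ∫⁻ y : E3, ENNReal.ofReal ((1 + ‖y‖) ^ (-s)) :=
        lintegral_const_mul' _ _ ENNReal.ofReal_ne_top
    _ < ⊤ := by
        apply ENNReal.mul_lt_top ENNReal.ofReal_lt_top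
        exact finite_integral_one_add_norm (by simp [finrank_euclideanSpace_fin]; linarith)

lemma main_bound (m κ₂ M : ℝ) (hm : 12 ≤ m)
    (κ : E3 → ℝ) (hκ_meas : Measurable κ) (hκ : ∀ x : E3, 0 ≤ κ x ∧ κ x ≤ κ₂)
    (f : E3 × E3 → ℝ) (hf_meas : Measurable f) (hf_nonneg : ∀ p, 0 ≤ f p)
    (hf_bdd : ∀ᵐ p : E3 × E3, f p ≤ M)
    (hmom : ∫⁻ p : E3 × E3, ENNReal.ofReal ((jap p.1 ^ m + jap p.2 ^ m) * f p) ≤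
      ENNReal.ofReal M)
    (α : ℝ) (hα1 : -2 < α) (hα2 : α ≤ 1) :
    ∃ C : ℝ, 0 < C ∧ ∀ x v : E3,
      (∫⁻ p : E3 × E3, ENNReal.ofReal (κ (x - p.1) * ‖v - p.2‖ ^ α * f p)) ≤
        ENNReal.ofReal (C * jap v ^ α) := by
  have hκ₂ : 0 ≤ κ₂ := le_trans (hκ 0).1 (hκ 0).2
  have hM : 0 ≤ M := by
    obtain ⟨p, hp⟩ := hf_bdd.exists
    exact le_trans (hf_nonneg p) hp
  have hm0 : (0:ℝ) ≤ m := by linarith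
  have hmom_ge_one : ∀ p : E3 × E3, 1 ≤ jap p.1 ^ m + jap p.2 ^ m := by
    intro p
    have h1 : (1:ℝ) ≤ jap p.1 ^ m := Real.one_le_rpow (one_le_jap _) hm0
    have h2 : (0:ℝ) ≤ jap p.2 ^ m := Real.rpow_nonneg (jap_nonneg _) m
    linarith
  rcases le_or_gt 0 α with hα0 | hα0
  · -- EASY CASE : 0 ≤ α ≤ 1
    refine ⟨κ₂ * M + 1, by positivity, fun x v => ?_⟩
    have hvα : (0:ℝ) ≤ jap v ^ α := Real.rpow_nonneg (jap_nonneg v) α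
    have hpt : ∀ p : E3 × E3, κ (x - p.1) * ‖v - p.2‖ ^ α * f p ≤
        (κ₂ * jap v ^ α) * ((jap p.1 ^ m + jap p.2 ^ m) * f p) := by
      intro p
      have h1 : ‖v - p.2‖ ^ α ≤ jap v ^ α * jap p.2 ^ α := by
        rw [← Real.mul_rpow (jap_nonneg v) (jap_nonneg p.2)]
        exact Real.rpow_le_rpow (norm_nonneg _)
          (le_trans (norm_sub_le v p.2) (add_norm_le_jap_mul v p.2)) hα0
      have h2 : jap p.2 ^ α ≤ jap p.2 ^ m :=
        Real.rpow_le_rpow_of_exponent_le (one_le_jap p.2) (by linarith)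
      have h3 : ‖v - p.2‖ ^ α ≤ jap v ^ α * (jap p.1 ^ m + jap p.2 ^ m) := by
        have h4 : (0:ℝ) ≤ jap p.1 ^ m := Real.rpow_nonneg (jap_nonneg _) m
        have h5 : (0:ℝ) ≤ jap p.2 ^ α := Real.rpow_nonneg (jap_nonneg _) α
        nlinarith
      have hk2 := (hκ (x - p.1)).2
      have hnm : (0:ℝ) ≤ ‖v - p.2‖ ^ α := Real.rpow_nonneg (norm_nonneg _) α
      calc κ (x - p.1) * ‖v - p.2‖ ^ α * f p
          ≤ (κ₂ * (jap v ^ α * (jap p.1 ^ m + jap p.2 ^ m))) * f p :=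
            mul_le_mul_of_nonneg_right (mul_le_mul hk2 h3 hnm hκ₂) (hf_nonneg p)
        _ = (κ₂ * jap v ^ α) * ((jap p.1 ^ m + jap p.2 ^ m) * f p) := by ring
    calc (∫⁻ p : E3 × E3, ENNReal.ofReal (κ (x - p.1) * ‖v - p.2‖ ^ α * f p))
        ≤ ∫⁻ p : E3 × E3, ENNReal.ofReal ((κ₂ * jap v ^ α) *
            ((jap p.1 ^ m + jap p.2 ^ m) * f p)) :=
          lintegral_mono fun p => ENNReal.ofReal_le_ofReal (hpt p)
      _ = ENNReal.ofReal (κ₂ * jap v ^ α) *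
            ∫⁻ p : E3 × E3, ENNReal.ofReal ((jap p.1 ^ m + jap p.2 ^ m) * f p) := by
          simp_rw [ENNReal.ofReal_mul (mul_nonneg hκ₂ hvα)]
          exact lintegral_const_mul' _ _ ENNReal.ofReal_ne_top
      _ ≤ ENNReal.ofReal (κ₂ * jap v ^ α) * ENNReal.ofReal M :=
          mul_le_mul_right hmom _
      _ = ENNReal.ofReal ((κ₂ * jap v ^ α) * M) :=
          (ENNReal.ofReal_mul (mul_nonneg hκ₂ hvα)).symm
      _ ≤ ENNReal.ofReal ((κ₂ * M + 1) * jap v ^ α) :=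
          ENNReal.ofReal_le_ofReal (by nlinarith)
  · -- HARD CASE : -2 < α < 0
    set s : ℝ := 9 + 3 * α with hs
    have hs3 : 3 < s := by rw [hs]; linarith
    have hJ : (∫⁻ y : E3, ENNReal.ofReal (jap y ^ (-s))) < ⊤ := lintegral_jap_rpow_lt_top hs3
    set J := ∫⁻ y : E3, ENNReal.ofReal (jap y ^ (-s)) with hJdef
    set B := volume (Metric.ball (0:E3) 1) with hBdef
    have hB : B < ⊤ := measure_ball_lt_top
    set D : ℝ≥0∞ := ENNReal.ofReal (κ₂ * M) * ((8 * B) * J) with hD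
    have hDfin : D ≠ ⊤ := by
      apply ENNReal.mul_ne_top ENNReal.ofReal_ne_top
      exact ENNReal.mul_ne_top (ENNReal.mul_ne_top (by norm_num) hB.ne) hJ.ne
    refine ⟨κ₂ * 16384 * M + D.toReal + 1, ?_, fun x v => ?_⟩
    · have h1 : 0 ≤ κ₂ * 16384 * M := mul_nonneg (mul_nonneg hκ₂ (by norm_num)) hM
      have h2 : (0:ℝ) ≤ D.toReal := ENNReal.toReal_nonneg
      linarith
    -- fixed x, v
    have hjv1 : 1 ≤ jap v := one_le_jap v
    have hjvpos : 0 < jap v := jap_pos v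
    have hvα : (0:ℝ) < jap v ^ α := Real.rpow_pos_of_pos hjvpos α
    set δ : E3 → ℝ := fun y => (2 * jap v ^ (2:ℝ) * jap y ^ (3:ℝ))⁻¹ with hδdef
    have hden : ∀ y : E3, 0 < 2 * jap v ^ (2:ℝ) * jap y ^ (3:ℝ) := fun y =>
      mul_pos (mul_pos two_pos (Real.rpow_pos_of_pos hjvpos 2))
        (Real.rpow_pos_of_pos (jap_pos y) 3)
    have hδpos : ∀ y : E3, 0 < δ y := fun y => inv_pos.mpr (hden y)
    -- THE KEY POINTWISE BOUND away from the singularity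
    have key : ∀ p : E3 × E3, δ p.1 ≤ ‖v - p.2‖ →
        ‖v - p.2‖ ^ α ≤ 16384 * (jap v ^ α * (jap p.1 ^ m + jap p.2 ^ m)) := by
      intro p hp
      have hJm1 : 1 ≤ jap p.1 ^ m + jap p.2 ^ m := hmom_ge_one p
      rcases le_or_gt (jap v / 2) ‖v - p.2‖ with hcase | hcase
      · -- far region
        have h1 : ‖v - p.2‖ ^ α ≤ (jap v / 2) ^ α :=
          Real.rpow_le_rpow_of_nonpos (by linarith) hcase hα0.le
        have h2 : (jap v / 2) ^ α = jap v ^ α * (2:ℝ)⁻¹ ^ α := by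
          rw [div_eq_mul_inv, Real.mul_rpow (jap_nonneg v) (by norm_num)]
        have h3 : ((2:ℝ)⁻¹) ^ α ≤ 4 := by
          calc ((2:ℝ)⁻¹) ^ α ≤ ((2:ℝ)⁻¹) ^ (-2:ℝ) :=
              Real.rpow_le_rpow_of_exponent_ge (by norm_num) (by norm_num) (by linarith)
            _ = 4 := two_inv_rpow_neg_two
        calc ‖v - p.2‖ ^ α ≤ jap v ^ α * (2:ℝ)⁻¹ ^ α := h1.trans_eq h2
          _ ≤ jap v ^ α * 4 := by nlinarith
          _ ≤ 16384 * (jap v ^ α * (jap p.1 ^ m + jap p.2 ^ m)) := by nlinarith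
      · -- intermediate region : jap v ≤ 4 * jap p.2
        have hw : jap v ≤ 4 * jap p.2 := by
          have h1 : ‖v‖ ≤ ‖v - p.2‖ + ‖p.2‖ := by
            have := norm_add_le (v - p.2) p.2
            simpa using this
          have h2 := jap_le_one_add_norm v
          have h3 := one_le_jap p.2
          have h4 := norm_le_jap p.2
          linarith
        have hδα : ‖v - p.2‖ ^ α ≤ (δ p.1) ^ α :=
          Real.rpow_le_rpow_of_nonpos (hδpos p.1) hp hα0.le
        have e0 : (δ p.1) ^ α = (2 * jap v ^ (2:ℝ) * jap p.1 ^ (3:ℝ)) ^ (-α) := by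
          rw [hδdef]
          rw [Real.inv_rpow (hden p.1).le, ← Real.rpow_neg (hden p.1).le]
        have e1 : (2 * jap v ^ (2:ℝ) * jap p.1 ^ (3:ℝ)) ^ (-α)
            = (2:ℝ) ^ (-α) * (jap v ^ (2:ℝ)) ^ (-α) * (jap p.1 ^ (3:ℝ)) ^ (-α) := by
          rw [Real.mul_rpow (mul_nonneg (by norm_num) (Real.rpow_nonneg (jap_nonneg v) _))
            (Real.rpow_nonneg (jap_nonneg p.1) _),
            Real.mul_rpow (by norm_num) (Real.rpow_nonneg (jap_nonneg v) _)]
        have e2 : (jap v ^ (2:ℝ)) ^ (-α) = jap v ^ (2 * (-α)) :=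
          (Real.rpow_mul (jap_nonneg v) 2 (-α)).symm
        have e3 : (jap p.1 ^ (3:ℝ)) ^ (-α) = jap p.1 ^ (3 * (-α)) :=
          (Real.rpow_mul (jap_nonneg p.1) 3 (-α)).symm
        have b1 : (2:ℝ) ^ (-α) ≤ 4 := by
          calc (2:ℝ) ^ (-α) ≤ (2:ℝ) ^ (2:ℝ) :=
              Real.rpow_le_rpow_of_exponent_le (by norm_num) (by linarith)
            _ = 4 := rpow_two_eq_four
        have b2 : jap v ^ (2 * (-α)) ≤ jap v ^ (4:ℝ) :=
          Real.rpow_le_rpow_of_exponent_le hjv1 (by linarith)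
        have b3 : jap p.1 ^ (3 * (-α)) ≤ jap p.1 ^ (6:ℝ) :=
          Real.rpow_le_rpow_of_exponent_le (one_le_jap p.1) (by linarith)
        have hδ4 : (δ p.1) ^ α ≤ 4 * jap v ^ (4:ℝ) * jap p.1 ^ (6:ℝ) := by
          rw [e0, e1, e2, e3]
          have p1 : (0:ℝ) < (2:ℝ) ^ (-α) := Real.rpow_pos_of_pos (by norm_num) _
          have p2 : (0:ℝ) < jap v ^ (2 * (-α)) := Real.rpow_pos_of_pos hjvpos _
          have p3 : (0:ℝ) < jap p.1 ^ (3 * (-α)) := Real.rpow_pos_of_pos (jap_pos p.1) _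
          have p4 : (0:ℝ) < jap v ^ (4:ℝ) := Real.rpow_pos_of_pos hjvpos _
          have p5 : (0:ℝ) < jap p.1 ^ (6:ℝ) := Real.rpow_pos_of_pos (jap_pos p.1) _
          calc (2:ℝ) ^ (-α) * jap v ^ (2 * (-α)) * jap p.1 ^ (3 * (-α))
              ≤ 4 * jap v ^ (2 * (-α)) * jap p.1 ^ (3 * (-α)) :=
                mul_le_mul_of_nonneg_right (mul_le_mul_of_nonneg_right b1 p2.le) p3.le
            _ ≤ 4 * jap v ^ (4:ℝ) * jap p.1 ^ (3 * (-α)) :=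
                mul_le_mul_of_nonneg_right
                  (mul_le_mul_of_nonneg_left b2 (by norm_num)) p3.le
            _ ≤ 4 * jap v ^ (4:ℝ) * jap p.1 ^ (6:ℝ) :=
                mul_le_mul_of_nonneg_left b3 (mul_nonneg (by norm_num) p4.le)
        have c1 : jap v ^ (6:ℝ) ≤ 4096 * jap p.2 ^ (6:ℝ) := by
          have h1 : jap v ^ (6:ℝ) ≤ (4 * jap p.2) ^ (6:ℝ) :=
            Real.rpow_le_rpow (jap_nonneg v) hw (by norm_num)
          have h2 : ((4:ℝ) * jap p.2) ^ (6:ℝ) = (4:ℝ) ^ (6:ℝ) * jap p.2 ^ (6:ℝ) :=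
            Real.mul_rpow (by norm_num) (jap_nonneg p.2)
          have h3 : ((4:ℝ)) ^ (6:ℝ) = 4096 := by
            rw [show (4:ℝ) = ((4:ℕ):ℝ) by norm_num,
              show (6:ℝ) = ((6:ℕ):ℝ) by norm_num, Real.rpow_natCast]
            norm_num
          rw [h2, h3] at h1
          exact h1
        have c2 : jap v ^ (4:ℝ) = jap v ^ (-2:ℝ) * jap v ^ (6:ℝ) := by
          rw [← Real.rpow_add hjvpos]; norm_num
        have d1 : jap v ^ (-2:ℝ) ≤ jap v ^ α :=
          Real.rpow_le_rpow_of_exponent_le hjv1 (by linarith)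
        have d2 : jap p.1 ^ (6:ℝ) * jap p.2 ^ (6:ℝ) ≤ jap p.1 ^ m + jap p.2 ^ m :=
          six_six_le (one_le_jap p.1) (one_le_jap p.2) hm
        -- assemble
        have p6 : (0:ℝ) < jap v ^ (-2:ℝ) := Real.rpow_pos_of_pos hjvpos _
        have p7 : (0:ℝ) < jap p.1 ^ (6:ℝ) := Real.rpow_pos_of_pos (jap_pos p.1) _
        have p8 : (0:ℝ) < jap p.2 ^ (6:ℝ) := Real.rpow_pos_of_pos (jap_pos p.2) _
        have p9 : (0:ℝ) < jap v ^ (6:ℝ) := Real.rpow_pos_of_pos hjvpos _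
        calc ‖v - p.2‖ ^ α ≤ (δ p.1) ^ α := hδα
          _ ≤ 4 * jap v ^ (4:ℝ) * jap p.1 ^ (6:ℝ) := hδ4
          _ = 4 * jap v ^ (-2:ℝ) * (jap v ^ (6:ℝ) * jap p.1 ^ (6:ℝ)) := by
              rw [c2]; ring
          _ ≤ 4 * jap v ^ (-2:ℝ) * ((4096 * jap p.2 ^ (6:ℝ)) * jap p.1 ^ (6:ℝ)) :=
              mul_le_mul_of_nonneg_left (mul_le_mul_of_nonneg_right c1 p7.le)
                (mul_nonneg (by norm_num) p6.le)
          _ = 16384 * (jap v ^ (-2:ℝ) * (jap p.1 ^ (6:ℝ) * jap p.2 ^ (6:ℝ))) := by ring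
          _ ≤ 16384 * (jap v ^ α * (jap p.1 ^ m + jap p.2 ^ m)) := by
              have h1 : jap v ^ (-2:ℝ) * (jap p.1 ^ (6:ℝ) * jap p.2 ^ (6:ℝ))
                  ≤ jap v ^ α * (jap p.1 ^ m + jap p.2 ^ m) :=
                mul_le_mul d1 d2 (mul_nonneg p7.le p8.le) hvα.le
              linarith
    -- measurability helpers
    have mr : ∀ c : ℝ, Measurable fun t : ℝ => t ^ c := fun c => by fun_prop
    have hmeasF : Measurable fun p : E3 × E3 =>
        ENNReal.ofReal ((κ₂ * 16384 * jap v ^ α) * ((jap p.1 ^ m + jap p.2 ^ m) * f p)) := by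
      apply Measurable.ennreal_ofReal
      exact measurable_const.mul
        ((((mr m).comp (measurable_jap.comp measurable_fst)).add
          ((mr m).comp (measurable_jap.comp measurable_snd))).mul hf_meas)
    have hSopen : IsOpen {p : E3 × E3 | ‖v - p.2‖ < δ p.1} := by
      have hc1 : Continuous fun p : E3 × E3 => ‖v - p.2‖ :=
        (continuous_const.sub continuous_snd).norm
      have hc2 : Continuous fun p : E3 × E3 => δ p.1 := by
        rw [hδdef]
        apply Continuous.inv₀
        · exact (continuous_const.mul
            ((continuous_jap.comp continuous_fst).rpow_const
              (fun p => Or.inr (by norm_num))))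
        · exact fun p => ne_of_gt (hden p.1)
      exact isOpen_lt hc1 hc2
    have hmeasInd : Measurable fun p : E3 × E3 =>
        ENNReal.ofReal (if ‖v - p.2‖ < δ p.1 then ‖v - p.2‖ ^ α else 0) := by
      apply Measurable.ennreal_ofReal
      exact Measurable.ite hSopen.measurableSet
        ((mr α).comp (measurable_const.sub measurable_snd).norm) measurable_const
    -- the a.e. pointwise bound
    have hptwise : ∀ᵐ p : E3 × E3, κ (x - p.1) * ‖v - p.2‖ ^ α * f p ≤
        (κ₂ * 16384 * jap v ^ α) * ((jap p.1 ^ m + jap p.2 ^ m) * f p)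
        + κ₂ * M * (if ‖v - p.2‖ < δ p.1 then ‖v - p.2‖ ^ α else 0) := by
      refine hf_bdd.mono fun p hfM => ?_
      have hk2 := (hκ (x - p.1)).2
      have hnm : (0:ℝ) ≤ ‖v - p.2‖ ^ α := Real.rpow_nonneg (norm_nonneg _) α
      have hfp := hf_nonneg p
      have hF0 : 0 ≤ (κ₂ * 16384 * jap v ^ α) * ((jap p.1 ^ m + jap p.2 ^ m) * f p) :=
        mul_nonneg (mul_nonneg (mul_nonneg hκ₂ (by norm_num)) hvα.le)
          (mul_nonneg (by linarith [hmom_ge_one p]) hfp)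
      by_cases h : ‖v - p.2‖ < δ p.1
      · rw [if_pos h]
        have hle : κ (x - p.1) * ‖v - p.2‖ ^ α * f p ≤ κ₂ * M * ‖v - p.2‖ ^ α := by
          calc κ (x - p.1) * ‖v - p.2‖ ^ α * f p
              ≤ (κ₂ * ‖v - p.2‖ ^ α) * M :=
                mul_le_mul (mul_le_mul_of_nonneg_right hk2 hnm) hfM hfp
                  (mul_nonneg hκ₂ hnm)
            _ = κ₂ * M * ‖v - p.2‖ ^ α := by ring
        linarith
      · rw [if_neg h, mul_zero, add_zero]
        push_neg at h
        calc κ (x - p.1) * ‖v - p.2‖ ^ α * f p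
            ≤ (κ₂ * (16384 * (jap v ^ α * (jap p.1 ^ m + jap p.2 ^ m)))) * f p :=
              mul_le_mul_of_nonneg_right (mul_le_mul hk2 (key p h) hnm hκ₂) hfp
          _ = (κ₂ * 16384 * jap v ^ α) * ((jap p.1 ^ m + jap p.2 ^ m) * f p) := by ring
    -- far part
    have hFar : (∫⁻ p : E3 × E3, ENNReal.ofReal ((κ₂ * 16384 * jap v ^ α) *
        ((jap p.1 ^ m + jap p.2 ^ m) * f p))) ≤
        ENNReal.ofReal (κ₂ * 16384 * M * jap v ^ α) := by
      have hc : (0:ℝ) ≤ κ₂ * 16384 * jap v ^ α :=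
        mul_nonneg (mul_nonneg hκ₂ (by norm_num)) hvα.le
      calc (∫⁻ p : E3 × E3, ENNReal.ofReal ((κ₂ * 16384 * jap v ^ α) *
            ((jap p.1 ^ m + jap p.2 ^ m) * f p)))
          = ENNReal.ofReal (κ₂ * 16384 * jap v ^ α) *
              ∫⁻ p : E3 × E3, ENNReal.ofReal ((jap p.1 ^ m + jap p.2 ^ m) * f p) := by
            simp_rw [ENNReal.ofReal_mul hc]
            exact lintegral_const_mul' _ _ ENNReal.ofReal_ne_top
        _ ≤ ENNReal.ofReal (κ₂ * 16384 * jap v ^ α) * ENNReal.ofReal M :=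
            mul_le_mul_right hmom _
        _ = ENNReal.ofReal (κ₂ * 16384 * M * jap v ^ α) := by
            rw [← ENNReal.ofReal_mul hc]
            ring_nf
    -- near part
    have hNear : (∫⁻ p : E3 × E3, ENNReal.ofReal (κ₂ * M *
        (if ‖v - p.2‖ < δ p.1 then ‖v - p.2‖ ^ α else 0))) ≤
        ENNReal.ofReal (D.toReal * jap v ^ α) := by
      have hcM : (0:ℝ) ≤ κ₂ * M := mul_nonneg hκ₂ hM
      have hvα' : (0:ℝ) ≤ jap v ^ α := hvα.le
      -- inner estimate for fixed y
      have step3 : ∀ y : E3,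
          (∫⁻ w : E3, ENNReal.ofReal (if ‖v - w‖ < δ y then ‖v - w‖ ^ α else 0))
          ≤ (ENNReal.ofReal (jap v ^ α) * (8 * B)) * ENNReal.ofReal (jap y ^ (-s)) := by
        intro y
        have hmeasg : Measurable fun u : E3 =>
            ENNReal.ofReal (if ‖u‖ < δ y then ‖u‖ ^ α else 0) := by
          apply Measurable.ennreal_ofReal
          exact Measurable.ite
            ((isOpen_lt continuous_norm continuous_const).measurableSet)
            ((mr α).comp measurable_norm) measurable_const
        have hchg : (∫⁻ w : E3, ENNReal.ofReal (if ‖v - w‖ < δ y then ‖v - w‖ ^ α else 0))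
            = ∫⁻ u : E3, ENNReal.ofReal (if ‖u‖ < δ y then ‖u‖ ^ α else 0) :=
          (Measure.measurePreserving_sub_left volume v).lintegral_comp hmeasg
        rw [hchg]
        refine le_trans (ball_rpow_bound hα1 hα0 (hδpos y)) ?_
        -- real estimate : δ y ^ (3+α) ≤ jap v ^ α * jap y ^ (-s)
        have hreal : (δ y) ^ (3 + α) ≤ jap v ^ α * jap y ^ (-s) := by
          have h3α : (0:ℝ) < 3 + α := by linarith
          have e0 : (δ y) ^ (3 + α) = (2 * jap v ^ (2:ℝ) * jap y ^ (3:ℝ)) ^ (-(3 + α)) := by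
            rw [hδdef]
            rw [Real.inv_rpow (hden y).le, ← Real.rpow_neg (hden y).le]
          have e1 : (2 * jap v ^ (2:ℝ) * jap y ^ (3:ℝ)) ^ (-(3 + α))
              = (2:ℝ) ^ (-(3 + α)) * (jap v ^ (2:ℝ)) ^ (-(3 + α)) *
                (jap y ^ (3:ℝ)) ^ (-(3 + α)) := by
            rw [Real.mul_rpow (mul_nonneg (by norm_num) (Real.rpow_nonneg (jap_nonneg v) _))
              (Real.rpow_nonneg (jap_nonneg y) _),
              Real.mul_rpow (by norm_num) (Real.rpow_nonneg (jap_nonneg v) _)]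
          have e2 : (jap v ^ (2:ℝ)) ^ (-(3 + α)) = jap v ^ (2 * (-(3 + α))) :=
            (Real.rpow_mul (jap_nonneg v) 2 _).symm
          have e3 : (jap y ^ (3:ℝ)) ^ (-(3 + α)) = jap y ^ (-s) := by
            rw [← Real.rpow_mul (jap_nonneg y)]
            congr 1
            rw [hs]; ring
          have b1 : (2:ℝ) ^ (-(3 + α)) ≤ 1 :=
            Real.rpow_le_one_of_one_le_of_nonpos (by norm_num) (by linarith)
          have b2 : jap v ^ (2 * (-(3 + α))) ≤ jap v ^ α :=
            Real.rpow_le_rpow_of_exponent_le hjv1 (by linarith)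
          have p1 : (0:ℝ) < jap v ^ (2 * (-(3 + α))) := Real.rpow_pos_of_pos hjvpos _
          have p2 : (0:ℝ) < jap y ^ (-s) := Real.rpow_pos_of_pos (jap_pos y) _
          have p3 : (0:ℝ) < (2:ℝ) ^ (-(3 + α)) := Real.rpow_pos_of_pos (by norm_num) _
          calc (δ y) ^ (3 + α)
              = (2:ℝ) ^ (-(3 + α)) * jap v ^ (2 * (-(3 + α))) * jap y ^ (-s) := by
                rw [e0, e1, e2, e3]
            _ ≤ 1 * (jap v ^ α) * jap y ^ (-s) := by
                apply mul_le_mul_of_nonneg_right _ p2.le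
                calc (2:ℝ) ^ (-(3 + α)) * jap v ^ (2 * (-(3 + α)))
                    ≤ 1 * jap v ^ (2 * (-(3 + α))) :=
                      mul_le_mul_of_nonneg_right b1 p1.le
                  _ ≤ 1 * jap v ^ α := by
                      rw [one_mul, one_mul]
                      exact b2
            _ = jap v ^ α * jap y ^ (-s) := by ring
        calc ENNReal.ofReal ((δ y) ^ (3 + α)) * (8 * B)
            ≤ ENNReal.ofReal (jap v ^ α * jap y ^ (-s)) * (8 * B) :=
              mul_le_mul_left (ENNReal.ofReal_le_ofReal hreal) _
          _ = (ENNReal.ofReal (jap v ^ α) * (8 * B)) * ENNReal.ofReal (jap y ^ (-s)) := by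
              rw [ENNReal.ofReal_mul hvα']
              ring
      have hcfin : ENNReal.ofReal (jap v ^ α) * (8 * B) ≠ ⊤ :=
        ENNReal.mul_ne_top ENNReal.ofReal_ne_top
          (ENNReal.mul_ne_top (by norm_num) hB.ne)
      calc (∫⁻ p : E3 × E3, ENNReal.ofReal (κ₂ * M *
            (if ‖v - p.2‖ < δ p.1 then ‖v - p.2‖ ^ α else 0)))
          = ENNReal.ofReal (κ₂ * M) * ∫⁻ p : E3 × E3,
              ENNReal.ofReal (if ‖v - p.2‖ < δ p.1 then ‖v - p.2‖ ^ α else 0) := by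
            simp_rw [ENNReal.ofReal_mul hcM]
            exact lintegral_const_mul' _ _ ENNReal.ofReal_ne_top
        _ = ENNReal.ofReal (κ₂ * M) * ∫⁻ y : E3, ∫⁻ w : E3,
              ENNReal.ofReal (if ‖v - w‖ < δ y then ‖v - w‖ ^ α else 0) := by
            rw [Measure.volume_eq_prod, lintegral_prod _ hmeasInd.aemeasurable]
        _ ≤ ENNReal.ofReal (κ₂ * M) * ∫⁻ y : E3,
              (ENNReal.ofReal (jap v ^ α) * (8 * B)) * ENNReal.ofReal (jap y ^ (-s)) :=
            mul_le_mul_right (lintegral_mono step3) _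
        _ = ENNReal.ofReal (κ₂ * M) * ((ENNReal.ofReal (jap v ^ α) * (8 * B)) * J) := by
            rw [lintegral_const_mul' _ _ hcfin, hJdef]
        _ = D * ENNReal.ofReal (jap v ^ α) := by
            rw [hD]
            ring
        _ = ENNReal.ofReal (D.toReal) * ENNReal.ofReal (jap v ^ α) := by
            rw [ENNReal.ofReal_toReal hDfin]
        _ = ENNReal.ofReal (D.toReal * jap v ^ α) :=
            (ENNReal.ofReal_mul ENNReal.toReal_nonneg).symm
    -- put everything together
    calc (∫⁻ p : E3 × E3, ENNReal.ofReal (κ (x - p.1) * ‖v - p.2‖ ^ α * f p))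
        ≤ ∫⁻ p : E3 × E3,
            (ENNReal.ofReal ((κ₂ * 16384 * jap v ^ α) * ((jap p.1 ^ m + jap p.2 ^ m) * f p))
            + ENNReal.ofReal (κ₂ * M *
                (if ‖v - p.2‖ < δ p.1 then ‖v - p.2‖ ^ α else 0))) := by
          apply lintegral_mono_ae
          refine hptwise.mono fun p hp => ?_
          exact le_trans (ENNReal.ofReal_le_ofReal hp) ENNReal.ofReal_add_le
      _ = (∫⁻ p : E3 × E3, ENNReal.ofReal ((κ₂ * 16384 * jap v ^ α) *
              ((jap p.1 ^ m + jap p.2 ^ m) * f p)))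
          + ∫⁻ p : E3 × E3, ENNReal.ofReal (κ₂ * M *
              (if ‖v - p.2‖ < δ p.1 then ‖v - p.2‖ ^ α else 0)) :=
          lintegral_add_left hmeasF _
      _ ≤ ENNReal.ofReal (κ₂ * 16384 * M * jap v ^ α)
          + ENNReal.ofReal (D.toReal * jap v ^ α) := add_le_add hFar hNear
      _ = ENNReal.ofReal (κ₂ * 16384 * M * jap v ^ α + D.toReal * jap v ^ α) :=
          (ENNReal.ofReal_add
            (mul_nonneg (mul_nonneg (mul_nonneg hκ₂ (by norm_num)) hM) hvα.le)
            (mul_nonneg ENNReal.toReal_nonneg hvα.le)).symm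
      _ ≤ ENNReal.ofReal ((κ₂ * 16384 * M + D.toReal + 1) * jap v ^ α) :=
          ENNReal.ofReal_le_ofReal (by nlinarith [hvα.le])

/-- If `0 ≤ κ ≤ κ₂`, `0 ≤ f ≤ M` a.e. and
`∫ (⟨y⟩^m + ⟨w⟩^m) f ≤ M` with `m ≥ 12`, then for `γ ∈ (-2,0]`:
`∫ κ(x-y) |v-w|^{γ+1} f dy dw ≤ C ⟨v⟩^{γ+1}` and
`∫ κ(x-y) |v-w|^{γ} f dy dw ≤ C ⟨v⟩^{γ}` (stated with extended-real valued lower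
integrals). -/
theorem statement19 (γ m κ₂ M : ℝ) (hγ : γ ∈ Set.Ioc (-2 : ℝ) 0) (hm : 12 ≤ m)
    (κ : E3 → ℝ) (hκ_meas : Measurable κ) (hκ : ∀ x : E3, 0 ≤ κ x ∧ κ x ≤ κ₂)
    (f : E3 × E3 → ℝ) (hf_meas : Measurable f) (hf_nonneg : ∀ p, 0 ≤ f p)
    (hf_bdd : ∀ᵐ p : E3 × E3, f p ≤ M)
    (hmom : ∫⁻ p : E3 × E3, ENNReal.ofReal ((jap p.1 ^ m + jap p.2 ^ m) * f p) ≤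
      ENNReal.ofReal M) :
    ∃ C : ℝ, 0 < C ∧ ∀ x v : E3,
      (∫⁻ p : E3 × E3, ENNReal.ofReal (κ (x - p.1) * ‖v - p.2‖ ^ (γ + 1) * f p)) ≤
          ENNReal.ofReal (C * jap v ^ (γ + 1)) ∧
      (∫⁻ p : E3 × E3, ENNReal.ofReal (κ (x - p.1) * ‖v - p.2‖ ^ γ * f p)) ≤
          ENNReal.ofReal (C * jap v ^ γ) := by
  obtain ⟨hγ1, hγ2⟩ := hγ
  obtain ⟨C₁, hC₁, h₁⟩ := main_bound m κ₂ M hm κ hκ_meas hκ f hf_meas hf_nonneg hf_bdd hmom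
    (γ + 1) (by linarith) (by linarith)
  obtain ⟨C₂, hC₂, h₂⟩ := main_bound m κ₂ M hm κ hκ_meas hκ f hf_meas hf_nonneg hf_bdd hmom
    γ (by linarith) (by linarith)
  refine ⟨C₁ + C₂, by linarith, fun x v => ⟨?_, ?_⟩⟩
  · refine le_trans (h₁ x v) (ENNReal.ofReal_le_ofReal ?_)
    have := Real.rpow_nonneg (jap_nonneg v) (γ + 1)
    nlinarith
  · refine le_trans (h₂ x v) (ENNReal.ofReal_le_ofReal ?_)
    have := Real.rpow_nonneg (jap_nonneg v) γ
    nlinarith
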